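/- Let c' be a positive integer, F a finite graph, and φ : V(F) → Fin c' an F-valid coloring. If some (F,φ)-forbidden color is used on exactly one vertex v of F, then removing v and all its neighbors from F removes at least 2 vertices, and the restriction φ' of φ to F' = F − N[v], viewed as a (c'−1)-coloring (colors other than φ(v)), is F'-valid. -/

import Mathlib

/-- A set of vertices is independent: no edges inside it. -/
def IsIndepSet {V : Type*} (F : SimpleGraph V) (A : Set V) : Prop :=
  ∀ ⦃u⦄, u ∈ A → ∀ ⦃v⦄, v ∈ A → ¬ F.Adj u v

/-- if `φ : V → Fin c'` is `F`-valid, the color `φ v` is `(F,φ)`-forbidden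
(witness `A`), and `v` is the unique vertex colored `φ v`, then removing the closed
neighborhood of `v` removes at least two vertices, and the restriction of `φ` to
`F' = F - N[v]` is `F'`-valid as a coloring with the `c' - 1` colors other than `φ v`:
no independent set of `F'` attains all colors except `φ v`. -/
theorem remove_closed_nbhd_valid {V : Type*} [Fintype V] (F : SimpleGraph V)
    (c' : ℕ) (hc' : 0 < c') (φ : V → Fin c')
    (hvalid : ¬ ∃ A : Set V, IsIndepSet F A ∧ φ '' A = Set.univ)
    (v : V) (A : Set V) (hA : IsIndepSet F A) (hforb : φ '' A = {φ v}ᶜ)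
    (huniq : ∀ u : V, φ u = φ v → u = v) :
    2 ≤ (insert v (F.neighborSet v)).ncard ∧
      ¬ ∃ B : Set V, B ⊆ {u : V | u ≠ v ∧ ¬ F.Adj v u} ∧ IsIndepSet F B ∧
        φ '' B = {φ v}ᶜ := by
  have key : ∀ B : Set V, (∀ u ∈ B, ¬ F.Adj v u) → IsIndepSet F B →
      φ '' B = {φ v}ᶜ → False := by
    intro B hBn hBind hBim
    apply hvalid
    refine ⟨insert v B, ?_, ?_⟩
    · intro a ha b hb hab
      rcases ha with rfl | ha
      · rcases hb with rfl | hb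
        · exact F.loopless.irrefl _ hab
        · exact hBn _ hb hab
      · rcases hb with rfl | hb
        · exact hBn _ ha (hab.symm)
        · exact hBind ha hb hab
    · rw [Set.image_insert_eq, hBim]
      ext x; simp [em]
  constructor
  · -- v has a neighbor, else insert v A contradicts validity
    by_contra h
    push_neg at h
    have hne : (F.neighborSet v) = ∅ := by
      by_contra hne
      rw [Set.eq_empty_iff_forall_notMem] at hne
      push_neg at hne
      obtain ⟨w, hw⟩ := hne
      have hwv : w ≠ v := fun e => F.loopless.irrefl v (e ▸ hw)
      have : 2 ≤ (insert v (F.neighborSet v)).ncard := by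
        have : ({v, w} : Set V) ⊆ insert v (F.neighborSet v) := by
          intro x hx; rcases hx with rfl | hx
          · exact Set.mem_insert _ _
          · simp at hx; subst hx; exact Set.mem_insert_of_mem _ hw
        calc 2 = ({v, w} : Set V).ncard := by
                  rw [Set.ncard_pair (Ne.symm hwv)]
          _ ≤ _ := Set.ncard_le_ncard this (Set.toFinite _)
      omega
    exact key A (fun u _ hadj => (Set.eq_empty_iff_forall_notMem.mp hne u) hadj)
      hA hforb
  · rintro ⟨B, hBsub, hBind, hBim⟩
    exact key B (fun u hu => (hBsub hu).2) hBind hBim
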